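/- Let φ be an orthonormal N-frame and η ∈ T_φ. Suppose q : ℝ → (Fin N → E) and R : ℝ → ℝ^{N×N} are differentiable at 0 and satisfy, for all t in a neighborhood of 0: q(t)·R(t) = φ + tη, ⟦q(t), q(t)⟧ = I_N, R(t) is upper triangular, q(0) = φ and R(0) = I_N. Then q has derivative η at t = 0 (so the qR-based retraction satisfies the local rigidity condition of a retraction). -/

import Mathlib

open scoped RealInnerProductSpace

/-- The outer product `⟦v,w⟧ ∈ ℝ^{N×N}` of two tuples, with entries `⟨v i, w j⟩`. -/
noncomputable def outerProd {N : ℕ} {H₀ : Type*} [NormedAddCommGroup H₀]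
    [InnerProductSpace ℝ H₀] (v w : Fin N → H₀) : Matrix (Fin N) (Fin N) ℝ :=
  Matrix.of fun i j => ⟪v i, w j⟫

/-- Multiplication of a tuple by a matrix from the right: `(vS)_j = Σ_i S_{ij} v_i`. -/
def smulMat {N : ℕ} {H₀ : Type*} [AddCommGroup H₀] [Module ℝ H₀]
    (v : Fin N → H₀) (S : Matrix (Fin N) (Fin N) ℝ) : Fin N → H₀ :=
  fun j => ∑ i, S i j • v i

/-- The inner product `(v,w)_H = Σ_j ⟨v_j, w_j⟩ = tr⟦v,w⟧`. -/
noncomputable def innerH {N : ℕ} {H₀ : Type*} [NormedAddCommGroup H₀]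
    [InnerProductSpace ℝ H₀] (v w : Fin N → H₀) : ℝ :=
  ∑ j, ⟪v j, w j⟫

/-- local rigidity of the `qR`-based retraction: if `q(t)R(t) = φ + tη` is
the `qR` decomposition of the curve `φ + tη` near `t = 0`, with `q, R` differentiable at
`0`, `q(0) = φ` and `R(0) = I`, then `q'(0) = η`. -/
theorem qR_retraction_local_rigidity {N : ℕ} (hN : 1 ≤ N) {E : Type*}
    [NormedAddCommGroup E] [InnerProductSpace ℝ E]
    (φ η : Fin N → E) (hφ : outerProd φ φ = 1)
    (hη : outerProd η φ + outerProd φ η = 0)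
    (q : ℝ → Fin N → E) (R : ℝ → Matrix (Fin N) (Fin N) ℝ)
    (hqdiff : DifferentiableAt ℝ q 0)
    (hRdiff : ∀ i j : Fin N, DifferentiableAt ℝ (fun t => R t i j) 0)
    (heq : ∀ᶠ t in nhds (0 : ℝ), smulMat (q t) (R t) = φ + t • η)
    (horth : ∀ᶠ t in nhds (0 : ℝ), outerProd (q t) (q t) = 1)
    (htri : ∀ᶠ t in nhds (0 : ℝ), ∀ i j : Fin N, j < i → R t i j = 0)
    (hq0 : q 0 = φ) (hR0 : R 0 = 1) :
    HasDerivAt q η 0 := by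
  classical
  set q' := deriv q 0 with hq'def
  have hq : HasDerivAt q q' 0 := hqdiff.hasDerivAt
  have hqj : ∀ j, HasDerivAt (fun t => q t j) (q' j) 0 := fun j => hasDerivAt_pi.mp hq j
  set A : Matrix (Fin N) (Fin N) ℝ := Matrix.of fun i j => deriv (fun t => R t i j) 0 with hAdef
  have hR : ∀ i j, HasDerivAt (fun t => R t i j) (A i j) 0 := fun i j => (hRdiff i j).hasDerivAt
  -- q' j = η j - ∑ i, A i j • φ i
  have key : ∀ j, q' j = η j - ∑ i, A i j • φ i := by
    intro j
    have h1 : HasDerivAt (fun t => ∑ i, R t i j • q t i) ((∑ i, A i j • φ i) + q' j) 0 := by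
      have h : HasDerivAt (fun t => ∑ i, R t i j • q t i)
          (∑ i, (R 0 i j • q' i + A i j • q 0 i)) 0 :=
        HasDerivAt.fun_sum fun i _ => (hR i j).smul (hqj i)
      have hs : (∑ i, (R 0 i j • q' i + A i j • q 0 i)) = (∑ i, A i j • φ i) + q' j := by
        rw [hq0, hR0, Finset.sum_add_distrib]
        simp [Matrix.one_apply, add_comm]
      rwa [hs] at h
    have h2 : HasDerivAt (fun t => ∑ i, R t i j • q t i) (η j) 0 := by
      have hc : HasDerivAt (fun t : ℝ => φ j + t • η j) (η j) 0 := by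
        simpa using (hasDerivAt_const (0:ℝ) (φ j)).fun_add ((hasDerivAt_id (0:ℝ)).smul_const (η j))
      apply hc.congr_of_eventuallyEq
      filter_upwards [heq] with t ht
      have := congrFun ht j
      simpa [smulMat] using this
    have h3 := h1.unique h2
    rw [← h3]; abel
  -- skew symmetry of the "derivative" of q
  have hskew : ∀ i j, ⟪q' i, φ j⟫ + ⟪φ i, q' j⟫ = 0 := by
    intro i j
    have h1 : HasDerivAt (fun t => ⟪q t i, q t j⟫) (⟪φ i, q' j⟫ + ⟪q' i, φ j⟫) 0 := by
      have := (hqj i).inner ℝ (hqj j)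
      simpa [hq0] using this
    have h2 : HasDerivAt (fun t => ⟪q t i, q t j⟫) 0 0 := by
      apply (hasDerivAt_const (0:ℝ) ((1 : Matrix (Fin N) (Fin N) ℝ) i j)).congr_of_eventuallyEq
      filter_upwards [horth] with t ht
      have := congrFun (congrFun (congrArg (fun M => (M : Matrix (Fin N) (Fin N) ℝ)) ht) i) j
      simpa [outerProd] using this
    have := h1.unique h2
    linarith [this]
  -- A is skew
  have hAskew : ∀ i j, A j i + A i j = 0 := by
    intro i j
    have hφo : ∀ k l : Fin N, ⟪φ k, φ l⟫ = if k = l then (1:ℝ) else 0 := by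
      intro k l
      have := congrFun (congrFun (congrArg (fun M => (M : Matrix (Fin N) (Fin N) ℝ)) hφ) k) l
      simpa [outerProd, Matrix.one_apply] using this
    have h := hskew i j
    rw [key i, key j] at h
    have hη' : ⟪η i, φ j⟫ + ⟪φ i, η j⟫ = 0 := by
      have := congrFun (congrFun (congrArg (fun M => (M : Matrix (Fin N) (Fin N) ℝ)) hη) i) j
      simpa [outerProd] using this
    have e1 : ⟪η i - ∑ k, A k i • φ k, φ j⟫ = ⟪η i, φ j⟫ - A j i := by
      rw [inner_sub_left, sum_inner]
      congr 1
      simp [inner_smul_left, hφo, Finset.sum_ite_eq]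
    have e2 : ⟪φ i, η j - ∑ k, A k j • φ k⟫ = ⟪φ i, η j⟫ - A i j := by
      rw [inner_sub_right, inner_sum]
      congr 1
      simp [inner_smul_right, hφo, Finset.sum_ite_eq]
    rw [e1, e2] at h
    linarith
  -- A is upper triangular
  have hAtri : ∀ i j : Fin N, j < i → A i j = 0 := by
    intro i j hij
    have h2 : HasDerivAt (fun t => R t i j) 0 0 := by
      apply (hasDerivAt_const (0:ℝ) (0:ℝ)).congr_of_eventuallyEq
      filter_upwards [htri] with t ht
      exact ht i j hij
    exact (hR i j).unique h2
  have hA0 : A = 0 := by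
    ext i j
    rcases lt_trichotomy i j with h | h | h
    · have := hAskew i j
      have h2 := hAtri j i h
      simpa [h2] using this
    · subst h
      have := hAskew i i
      simpa using by linarith
    · simp [hAtri i j h]
  have : q' = η := by
    funext j
    rw [key j, hA0]
    simp
  rw [← this]
  exact hq
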